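/- Let μ, y ∈ ℝ and let s > 0, β > 0. Set μ' = μ + s·(y − μ)/(s + β⁻¹) and s' = s·β⁻¹/(s + β⁻¹). Then KL(N(μ, s) ‖ N(μ', s')) = (1/2)·β·s − (1/2)·log(1 + β·s) + (1/2)·(β·s/(s + β⁻¹))·(y − μ)². -/

import Mathlib

open MeasureTheory ProbabilityTheory Real Classical
open scoped NNReal

/-- The Kullback--Leibler divergence `KL(μ‖ν) = ∫ log (dμ/dν) dμ`, taking the value `⊤`
unless `μ ≪ ν` and the log-likelihood ratio is integrable. -/
noncomputable def klDiv {Ω : Type*} [MeasurableSpace Ω] (μ ν : Measure Ω) : EReal :=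
  if μ ≪ ν ∧ Integrable (llr μ ν) μ then ((∫ ω, llr μ ν ω ∂μ : ℝ) : EReal) else ⊤

section AuxKL
open Filter Set
open scoped ENNReal

lemma integrable_sq_mul_exp_neg_mul_sq {b : ℝ} (hb : 0 < b) :
    Integrable fun x : ℝ => x ^ 2 * Real.exp (-b * x ^ 2) := by
  have := integrable_rpow_mul_exp_neg_mul_sq hb (s := 2) (by norm_num)
  simpa [Real.rpow_natCast] using this

lemma tendsto_mul_exp_neg_mul_sq_atTop {b : ℝ} (hb : 0 < b) :
    Tendsto (fun x : ℝ => x * Real.exp (-b * x ^ 2)) atTop (nhds 0) := by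
  have h := rpow_mul_exp_neg_mul_sq_isLittleO_exp_neg hb 1
  have h2 : Tendsto (fun x : ℝ => Real.exp (-(1/2) * x)) atTop (nhds 0) := by
    simpa using Real.tendsto_exp_comp_nhds_zero.mpr
      (tendsto_id.const_mul_atTop_of_neg (by norm_num : (-(1/2) : ℝ) < 0))
  have := h.trans_tendsto h2
  refine this.congr' ?_
  filter_upwards [eventually_ge_atTop (0:ℝ)] with x hx
  rw [Real.rpow_one]

lemma integral_mul_exp_neg_mul_sq_zero {b : ℝ} (hb : 0 < b) :
    ∫ x : ℝ, x * Real.exp (-b * x ^ 2) = 0 := by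
  have h := MeasureTheory.integral_neg_eq_self (fun x : ℝ => x * Real.exp (-b * x ^ 2)) volume
  simp only [neg_mul, neg_sq, integral_neg] at h
  simp only [neg_mul]
  linarith [h]

lemma integral_sq_mul_exp_neg_mul_sq {b : ℝ} (hb : 0 < b) :
    ∫ x : ℝ, x ^ 2 * Real.exp (-b * x ^ 2) = Real.sqrt (π / b) / (2 * b) := by
  set F : ℝ → ℝ := fun x => -(2 * b)⁻¹ * (x * Real.exp (-b * x ^ 2)) with hF
  have hderiv : ∀ x : ℝ, HasDerivAt F
      (x ^ 2 * Real.exp (-b * x ^ 2) - (2 * b)⁻¹ * Real.exp (-b * x ^ 2)) x := by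
    intro x
    have h1 : HasDerivAt (fun x : ℝ => -b * x ^ 2) (-b * (2 * x)) x := by
      simpa using ((hasDerivAt_pow 2 x).const_mul (-b))
    have h2 : HasDerivAt (fun x : ℝ => Real.exp (-b * x ^ 2))
        (Real.exp (-b * x ^ 2) * (-b * (2 * x))) x := h1.exp
    have h3 : HasDerivAt (fun x : ℝ => x * Real.exp (-b * x ^ 2))
        (1 * Real.exp (-b * x ^ 2) + x * (Real.exp (-b * x ^ 2) * (-b * (2 * x)))) x :=
      (hasDerivAt_id x).mul h2
    have h4 := h3.const_mul (-(2 * b)⁻¹)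
    refine h4.congr_deriv ?_
    have hb0 : b ≠ 0 := hb.ne'
    field_simp
    ring
  have hFtop : Tendsto F atTop (nhds 0) := by
    have h := (tendsto_mul_exp_neg_mul_sq_atTop hb).const_mul (-(2 * b)⁻¹)
    rw [hF]; simpa using h
  have hFbot : Tendsto F atBot (nhds 0) := by
    have hodd : ∀ x, F (-x) = -F x := by intro x; simp only [hF]; ring
    have h1 : Tendsto (fun x => F (-x)) atTop (nhds 0) := by
      simp only [hodd]; simpa using hFtop.neg
    have h2 := h1.comp tendsto_neg_atBot_atTop
    simpa [Function.comp_def, neg_neg] using h2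
  have hint : Integrable (fun x : ℝ => x ^ 2 * Real.exp (-b * x ^ 2)
      - (2 * b)⁻¹ * Real.exp (-b * x ^ 2)) :=
    (integrable_sq_mul_exp_neg_mul_sq hb).sub ((integrable_exp_neg_mul_sq hb).const_mul _)
  have hIoi : ∫ x in Ioi (0:ℝ), (x ^ 2 * Real.exp (-b * x ^ 2)
      - (2 * b)⁻¹ * Real.exp (-b * x ^ 2)) = 0 - F 0 :=
    integral_Ioi_of_hasDerivAt_of_tendsto' (fun x _ => hderiv x) hint.integrableOn hFtop
  have hIic : ∫ x in Iic (0:ℝ), (x ^ 2 * Real.exp (-b * x ^ 2)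
      - (2 * b)⁻¹ * Real.exp (-b * x ^ 2)) = F 0 - 0 :=
    integral_Iic_of_hasDerivAt_of_tendsto' (fun x _ => hderiv x) hint.integrableOn hFbot
  have hsplit := intervalIntegral.integral_Iic_add_Ioi (b := (0:ℝ))
    hint.integrableOn hint.integrableOn
  rw [hIoi, hIic] at hsplit
  have hzero : ∫ x : ℝ, (x ^ 2 * Real.exp (-b * x ^ 2)
      - (2 * b)⁻¹ * Real.exp (-b * x ^ 2)) = 0 := by rw [← hsplit]; ring
  rw [integral_sub (integrable_sq_mul_exp_neg_mul_sq hb)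
    ((integrable_exp_neg_mul_sq hb).const_mul _), integral_const_mul,
    integral_gaussian] at hzero
  have hb' : (2 * b) ≠ 0 := by positivity
  field_simp at hzero ⊢
  simp_rw [show ∀ a : ℝ, a ^ 2 * b = b * a ^ 2 from fun a => mul_comm _ _] at hzero
  linarith

lemma gaussian_sq_aux (m c : ℝ) {v : ℝ≥0} (hv : v ≠ 0) :
    Integrable (fun x : ℝ => (x - c) ^ 2 * gaussianPDFReal m v x) ∧
    ∫ x : ℝ, (x - c) ^ 2 * gaussianPDFReal m v x = (v : ℝ) + (m - c) ^ 2 := by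
  have hv' : 0 < (v : ℝ) := by positivity
  set b : ℝ := (2 * (v : ℝ))⁻¹ with hb
  have hbpos : 0 < b := by rw [hb]; positivity
  set C : ℝ := (Real.sqrt (2 * π * v))⁻¹ with hC
  set d : ℝ := m - c with hd
  set g : ℝ → ℝ := fun t => (t + d) ^ 2 * (C * Real.exp (-b * t ^ 2)) with hg
  have I1 : Integrable (fun t : ℝ => C * (t ^ 2 * Real.exp (-b * t ^ 2))) :=
    (integrable_sq_mul_exp_neg_mul_sq hbpos).const_mul C
  have I2 : Integrable (fun t : ℝ => (2 * d * C) * (t * Real.exp (-b * t ^ 2))) :=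
    (integrable_mul_exp_neg_mul_sq hbpos).const_mul _
  have I3 : Integrable (fun t : ℝ => (d ^ 2 * C) * Real.exp (-b * t ^ 2)) :=
    (integrable_exp_neg_mul_sq hbpos).const_mul _
  have I12 : Integrable (fun t : ℝ => C * (t ^ 2 * Real.exp (-b * t ^ 2))
      + (2 * d * C) * (t * Real.exp (-b * t ^ 2))) := I1.add I2
  have hgeq : ∀ t, g t = (C * (t ^ 2 * Real.exp (-b * t ^ 2))
      + (2 * d * C) * (t * Real.exp (-b * t ^ 2))) + (d ^ 2 * C) * Real.exp (-b * t ^ 2) := by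
    intro t; simp only [hg]; ring
  have hg_int : Integrable g :=
    Integrable.congr (I12.add I3) (Filter.Eventually.of_forall fun t => (hgeq t).symm)
  have hCb : C * Real.sqrt (π / b) = 1 := by
    rw [hC, hb, show π / (2 * (v : ℝ))⁻¹ = 2 * π * (v : ℝ) by field_simp]
    rw [inv_mul_cancel₀]
    positivity
  have hg_integral : ∫ t : ℝ, g t = (v : ℝ) + d ^ 2 := by
    rw [integral_congr_ae (Filter.Eventually.of_forall hgeq),
      integral_add I12 I3, integral_add I1 I2,
      integral_const_mul, integral_const_mul, integral_const_mul,
      integral_sq_mul_exp_neg_mul_sq hbpos, integral_mul_exp_neg_mul_sq_zero hbpos,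
      integral_gaussian]
    have h1 : C * (Real.sqrt (π / b) / (2 * b)) = (v : ℝ) := by
      rw [div_eq_mul_inv, ← mul_assoc, hCb, one_mul, hb]
      field_simp
    rw [h1, show d ^ 2 * C * Real.sqrt (π / b) = d ^ 2 * (C * Real.sqrt (π / b)) by ring, hCb]
    ring
  have hkey : ∀ x : ℝ, (x - c) ^ 2 * gaussianPDFReal m v x = g (x - m) := by
    intro x
    have he : -(x - m) ^ 2 / (2 * (v : ℝ)) = -b * (x - m) ^ 2 := by rw [hb]; ring
    simp only [hg, gaussianPDFReal, hd]
    rw [show x - m + (m - c) = x - c by ring, he]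
  constructor
  · exact Integrable.congr (hg_int.comp_sub_right m)
      (Filter.Eventually.of_forall fun x => (hkey x).symm)
  · rw [integral_congr_ae (Filter.Eventually.of_forall hkey),
      integral_sub_right_eq_self g m, hg_integral]

lemma gaussianReal_withDensity (m : ℝ) {v : ℝ≥0} (hv : v ≠ 0) :
    gaussianReal m v = volume.withDensity
      (fun x => ((gaussianPDFReal m v x).toNNReal : ℝ≥0∞)) := by
  rw [gaussianReal_of_var_ne_zero m hv]
  rfl

lemma integrable_gaussianReal_iff (m : ℝ) {v : ℝ≥0} (hv : v ≠ 0) (h : ℝ → ℝ) :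
    Integrable h (gaussianReal m v) ↔
      Integrable (fun x => gaussianPDFReal m v x * h x) volume := by
  rw [gaussianReal_withDensity m hv,
    integrable_withDensity_iff_integrable_smul
      ((measurable_gaussianPDFReal m v).real_toNNReal)]
  refine integrable_congr (Filter.Eventually.of_forall fun x => ?_)
  simp [NNReal.smul_def, Real.coe_toNNReal _ (gaussianPDFReal_nonneg m v x)]

lemma integral_gaussianReal_eq (m : ℝ) {v : ℝ≥0} (hv : v ≠ 0) (h : ℝ → ℝ) :
    ∫ x, h x ∂(gaussianReal m v) = ∫ x, gaussianPDFReal m v x * h x := by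
  rw [gaussianReal_withDensity m hv,
    integral_withDensity_eq_integral_smul
      ((measurable_gaussianPDFReal m v).real_toNNReal)]
  refine integral_congr_ae (Filter.Eventually.of_forall fun x => ?_)
  simp [NNReal.smul_def, Real.coe_toNNReal _ (gaussianPDFReal_nonneg m v x)]

lemma integrable_sq_gaussianReal (m c : ℝ) {v : ℝ≥0} (hv : v ≠ 0) :
    Integrable (fun x => (x - c) ^ 2) (gaussianReal m v) := by
  rw [integrable_gaussianReal_iff m hv]
  refine Integrable.congr (gaussian_sq_aux m c hv).1
    (Filter.Eventually.of_forall fun x => by ring)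

lemma integral_sq_gaussianReal (m c : ℝ) {v : ℝ≥0} (hv : v ≠ 0) :
    ∫ x, (x - c) ^ 2 ∂(gaussianReal m v) = (v : ℝ) + (m - c) ^ 2 := by
  rw [integral_gaussianReal_eq m hv]
  rw [← (gaussian_sq_aux m c hv).2]
  exact integral_congr_ae (Filter.Eventually.of_forall fun x => by ring)

lemma log_gaussianPDFReal (m : ℝ) {v : ℝ≥0} (hv : v ≠ 0) (x : ℝ) :
    Real.log (gaussianPDFReal m v x)
      = -Real.log (Real.sqrt (2 * π * v)) - (x - m) ^ 2 / (2 * v) := by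
  have hv' : 0 < (v : ℝ) := by positivity
  have hs : (0:ℝ) < Real.sqrt (2 * π * v) := Real.sqrt_pos.mpr (by positivity)
  rw [gaussianPDFReal, Real.log_mul (by positivity) (Real.exp_ne_zero _),
    Real.log_inv, Real.log_exp]
  ring

lemma llr_gaussianReal_ae (m₁ m₂ : ℝ) {v₁ v₂ : ℝ≥0} (h₁ : v₁ ≠ 0) (h₂ : v₂ ≠ 0) :
    llr (gaussianReal m₁ v₁) (gaussianReal m₂ v₂) =ᵐ[gaussianReal m₁ v₁]
      fun x => Real.log (gaussianPDFReal m₁ v₁ x) - Real.log (gaussianPDFReal m₂ v₂ x) := by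
  set P := gaussianReal m₁ v₁
  set Q := gaussianReal m₂ v₂
  have hPv : P ≪ volume := gaussianReal_absolutelyContinuous m₁ h₁
  have hvQ : (volume : Measure ℝ) ≪ Q := gaussianReal_absolutelyContinuous' m₂ h₂
  have hPQ : P ≪ Q := hPv.trans hvQ
  have h1 := Measure.rnDeriv_mul_rnDeriv (κ := (volume : Measure ℝ)) hPQ
  have h2 := rnDeriv_gaussianReal m₁ v₁
  have h3 := rnDeriv_gaussianReal m₂ v₂
  have hvol : ∀ᵐ x ∂(volume : Measure ℝ),
      llr P Q x = Real.log (gaussianPDFReal m₁ v₁ x) - Real.log (gaussianPDFReal m₂ v₂ x) := by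
    filter_upwards [h1, h2, h3] with x hx1 hx2 hx3
    have hp2pos : 0 < gaussianPDFReal m₂ v₂ x := gaussianPDFReal_pos m₂ v₂ x h₂
    have hp1pos : 0 < gaussianPDFReal m₁ v₁ x := gaussianPDFReal_pos m₁ v₁ x h₁
    have hx1' : P.rnDeriv Q x * ENNReal.ofReal (gaussianPDFReal m₂ v₂ x)
        = ENNReal.ofReal (gaussianPDFReal m₁ v₁ x) := by
      have h := hx1
      rw [Pi.mul_apply, hx2, hx3] at h
      simpa [gaussianPDF] using h
    have hne : ENNReal.ofReal (gaussianPDFReal m₂ v₂ x) ≠ 0 := by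
      simp [ENNReal.ofReal_eq_zero, not_le, hp2pos]
    have hnetop : ENNReal.ofReal (gaussianPDFReal m₂ v₂ x) ≠ ⊤ := ENNReal.ofReal_ne_top
    have hrn : P.rnDeriv Q x = ENNReal.ofReal (gaussianPDFReal m₁ v₁ x)
        / ENNReal.ofReal (gaussianPDFReal m₂ v₂ x) := by
      rw [ENNReal.eq_div_iff hne hnetop, mul_comm]
      exact hx1'
    rw [llr, hrn, ENNReal.toReal_div, ENNReal.toReal_ofReal hp1pos.le,
      ENNReal.toReal_ofReal hp2pos.le, Real.log_div hp1pos.ne' hp2pos.ne']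
  exact hPv.ae_le hvol

lemma klDiv_gaussianReal_eq (m₁ m₂ : ℝ) {v₁ v₂ : ℝ≥0} (h₁ : v₁ ≠ 0) (h₂ : v₂ ≠ 0) :
    klDiv (gaussianReal m₁ v₁) (gaussianReal m₂ v₂) =
      (((1/2) * (Real.log (v₂ : ℝ) - Real.log (v₁ : ℝ))
        + ((v₁ : ℝ) + (m₁ - m₂) ^ 2) / (2 * (v₂ : ℝ)) - 1/2 : ℝ) : EReal) := by
  have hv₁ : 0 < (v₁ : ℝ) := by positivity
  have hv₂ : 0 < (v₂ : ℝ) := by positivity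
  set P := gaussianReal m₁ v₁ with hP
  have hPQ : P ≪ gaussianReal m₂ v₂ :=
    (gaussianReal_absolutelyContinuous m₁ h₁).trans (gaussianReal_absolutelyContinuous' m₂ h₂)
  set K : ℝ := Real.log (Real.sqrt (2 * π * v₂)) - Real.log (Real.sqrt (2 * π * v₁)) with hK
  set L : ℝ → ℝ := fun x => K + (2 * (v₂ : ℝ))⁻¹ * (x - m₂) ^ 2
      - (2 * (v₁ : ℝ))⁻¹ * (x - m₁) ^ 2 with hL
  have hae : llr P (gaussianReal m₂ v₂) =ᵐ[P] L := by
    refine (llr_gaussianReal_ae m₁ m₂ h₁ h₂).trans (Filter.Eventually.of_forall fun x => ?_)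
    show Real.log (gaussianPDFReal m₁ v₁ x) - Real.log (gaussianPDFReal m₂ v₂ x) = L x
    rw [log_gaussianPDFReal m₁ h₁ x, log_gaussianPDFReal m₂ h₂ x]
    simp only [hL, hK]
    field_simp
    ring
  have J1 : Integrable (fun _ : ℝ => K) P := integrable_const K
  have J2 : Integrable (fun x : ℝ => (2 * (v₂ : ℝ))⁻¹ * (x - m₂) ^ 2) P :=
    (integrable_sq_gaussianReal m₁ m₂ h₁).const_mul _
  have J3 : Integrable (fun x : ℝ => (2 * (v₁ : ℝ))⁻¹ * (x - m₁) ^ 2) P :=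
    (integrable_sq_gaussianReal m₁ m₁ h₁).const_mul _
  have J12 : Integrable (fun x : ℝ => K + (2 * (v₂ : ℝ))⁻¹ * (x - m₂) ^ 2) P := J1.add J2
  have hL_int : Integrable L P := J12.sub J3
  have hllr_int : Integrable (llr P (gaussianReal m₂ v₂)) P := hL_int.congr hae.symm
  rw [klDiv, if_pos ⟨hPQ, hllr_int⟩]
  congr 1
  rw [integral_congr_ae hae]
  have : IsProbabilityMeasure P := by rw [hP]; infer_instance
  rw [hL]
  rw [integral_sub J12 J3, integral_add J1 J2,
    integral_const, integral_const_mul, integral_const_mul,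
    integral_sq_gaussianReal m₁ m₂ h₁, integral_sq_gaussianReal m₁ m₁ h₁]
  simp only [measure_univ, probReal_univ, ENNReal.toReal_one, smul_eq_mul, one_mul, sub_self]
  have hKeq : K = (1/2) * (Real.log (v₂ : ℝ) - Real.log (v₁ : ℝ)) := by
    rw [hK, Real.log_sqrt (by positivity), Real.log_sqrt (by positivity),
      Real.log_mul (by positivity) hv₂.ne', Real.log_mul (by positivity) hv₁.ne']
    ring
  rw [hKeq]
  rw [show (0:ℝ) ^ 2 = 0 by ring]
  field_simp
  ring

end AuxKL

/-- **Lemma 4 (supplementary) of the paper.** The KL divergence between the Gaussian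
posterior `N(μ, s)` before adding a new sample and the Bayes-updated posterior `N(μ', s')`
after observing `y` with Gaussian noise precision `β`, where
`μ' = μ + s (y − μ)/(s + β⁻¹)` and `s' = s β⁻¹/(s + β⁻¹)`, equals
`(1/2)βs − (1/2)log(1 + βs) + (1/2)(βs/(s + β⁻¹))(y − μ)²`. -/
theorem klDiv_gaussianReal_bayes_update
    (μ y : ℝ) (s β : ℝ≥0) (hs : 0 < s) (hβ : 0 < β) :
    klDiv (gaussianReal μ s)
        (gaussianReal (μ + (s : ℝ) * (y - μ) / ((s : ℝ) + (β : ℝ)⁻¹)) (s * β⁻¹ / (s + β⁻¹))) =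
      (((1 / 2) * (β : ℝ) * (s : ℝ) - (1 / 2) * Real.log (1 + (β : ℝ) * (s : ℝ))
          + (1 / 2) * ((β : ℝ) * (s : ℝ) / ((s : ℝ) + (β : ℝ)⁻¹)) * (y - μ) ^ 2 : ℝ) :
        EReal) := by
  have hS : (0:ℝ) < (s : ℝ) := NNReal.coe_pos.mpr hs
  have hB : (0:ℝ) < (β : ℝ) := NNReal.coe_pos.mpr hβ
  have h₁ : s ≠ 0 := hs.ne'
  have h₂ : s * β⁻¹ / (s + β⁻¹) ≠ 0 := by
    have : 0 < s * β⁻¹ / (s + β⁻¹) :=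
      div_pos (mul_pos hs (inv_pos.mpr hβ)) (add_pos hs (inv_pos.mpr hβ))
    exact this.ne'
  rw [klDiv_gaussianReal_eq _ _ h₁ h₂]
  congr 1
  have hcast : ((s * β⁻¹ / (s + β⁻¹) : ℝ≥0) : ℝ)
      = (s : ℝ) * (β : ℝ)⁻¹ / ((s : ℝ) + (β : ℝ)⁻¹) := by push_cast; ring
  rw [hcast]
  have hv2 : (0:ℝ) < (s : ℝ) * (β : ℝ)⁻¹ / ((s : ℝ) + (β : ℝ)⁻¹) := by positivity
  have h1BS : (0:ℝ) < 1 + (β : ℝ) * (s : ℝ) := by positivity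
  have hlog : Real.log ((s : ℝ) * (β : ℝ)⁻¹ / ((s : ℝ) + (β : ℝ)⁻¹)) - Real.log (s : ℝ)
      = -Real.log (1 + (β : ℝ) * (s : ℝ)) := by
    have hprod : (s : ℝ) * (β : ℝ)⁻¹ / ((s : ℝ) + (β : ℝ)⁻¹) * (1 + (β : ℝ) * (s : ℝ))
        = (s : ℝ) := by
      field_simp
      all_goals first | ring1 | (left; ring1)
    have h := Real.log_mul hv2.ne' h1BS.ne'
    rw [hprod] at h
    linarith [h]
  rw [hlog]
  field_simp
  ring
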